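/- arXiv:1807.10325 — 2 statements merged into one kernel-verified Lean document; each statement's English description precedes it below -/
import Mathlib

section
/- Define M^u_d(z,θ) = Σ_{k=0}^{d} C(d,k) · ∏_{i=0}^{k-1}(θ + ρ_i²) · ∏_{i=k+1}^{d}(z-i)(z+i+u-d), where ρ_i = i + 1/2. Then for all natural numbers u and d ≥ 1, one has the two-variable polynomial identity M^u_d = (θ + (z+ρ_{u-d})²) · M^u_{d-1} − u(z+u) · M^{u-1}_{d-1} (with M^{u-1}_{d-1} interpreted for u ≥ 1; when u = 0 the second term vanishes since it has factor u). -/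
open Finset

/-- The two-variable polynomial ring `ℚ[z, θ]`: variable `0` is `z` and variable `1` is `θ`. -/
noncomputable abbrev R2 : Type := MvPolynomial (Fin 2) ℚ

noncomputable def z : R2 := MvPolynomial.X 0
noncomputable def θ : R2 := MvPolynomial.X 1

/-- `ρ n = n + 1/2` for a (possibly negative) integer `n`. -/
noncomputable def rho (n : ℤ) : R2 := (n : R2) + MvPolynomial.C (1 / 2 : ℚ)

/-- `M u d = Σ_{k=0}^{d} C(d,k) · ∏_{i=0}^{k-1}(θ + ρ_i²) · ∏_{i=k+1}^{d}(z-i)(z+i+u-d)`. -/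
noncomputable def M (u d : ℕ) : R2 :=
  ∑ k ∈ Finset.range (d + 1),
    (d.choose k : R2) * (∏ i ∈ Finset.range k, (θ + (rho (i : ℤ)) ^ 2)) *
      ∏ i ∈ Finset.Icc (k + 1) d, ((z - (i : R2)) * (z + (i : R2) + (u : R2) - (d : R2)))

/-! ### Auxiliary definitions -/

noncomputable def Cc : R2 := MvPolynomial.C (1 / 2 : ℚ)

noncomputable def Ak (k : ℕ) : R2 := ∏ i ∈ Finset.range k, (θ + (rho (i : ℤ)) ^ 2)

noncomputable def Pp (a : R2) (k e : ℕ) : R2 :=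
  ∏ i ∈ Finset.Icc (k + 1) e, ((z - (i : R2)) * (a + (i : R2)))

noncomputable def Sa (a : R2) (e : ℕ) : R2 :=
  ∑ k ∈ Finset.range (e + 1), (e.choose k : R2) * Ak k * Pp a k e

noncomputable def Ee (a : R2) (e k : ℕ) : R2 :=
  (k : R2) * (e.choose k : R2) * Ak k * (a + (k : R2) + 1) * Pp (a + 1) k e

lemma h2 : Cc * 2 = 1 := by
  have : (2 : R2) = MvPolynomial.C (2 : ℚ) := (map_ofNat MvPolynomial.C 2).symm
  rw [Cc, this, ← map_mul]
  norm_num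

lemma rho_nat (k : ℕ) : rho (k : ℤ) = (k : R2) + Cc := by
  simp [rho, Cc]

lemma Ak_succ (k : ℕ) : Ak (k + 1) = Ak k * (θ + ((k : R2) + Cc) ^ 2) := by
  rw [Ak, Finset.prod_range_succ, rho_nat, Ak]

lemma Pp_self (a : R2) (e : ℕ) : Pp a e e = 1 := by
  rw [Pp, Finset.Icc_eq_empty (by omega), Finset.prod_empty]

lemma Pp_top (a : R2) (k e : ℕ) (h : k ≤ e) :
    Pp a k (e + 1) = Pp a k e * ((z - ((e : R2) + 1)) * (a + ((e : R2) + 1))) := by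
  rw [Pp, Pp, Finset.prod_Icc_succ_top (by omega)]
  push_cast
  ring

lemma Pp_bot (a : R2) (k e : ℕ) (h : k < e) :
    Pp a k e = ((z - ((k : R2) + 1)) * (a + ((k : R2) + 1))) * Pp a (k + 1) e := by
  rw [Pp, Pp, ← Finset.Ico_add_one_right_eq_Icc, Finset.prod_eq_prod_Ico_succ_bot (by omega),
    Finset.Ico_add_one_right_eq_Icc]
  push_cast
  ring

/-- The key telescoping product identity. -/
lemma lemK (a : R2) (k e : ℕ) (h : k < e) :
    (a + (k : R2) + 2) * Pp (a + 1) (k + 1) e = (a + (e : R2) + 1) * Pp a (k + 1) e := by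
  induction e with
  | zero => omega
  | succ n ih =>
    rcases Nat.lt_or_ge k n with hn | hn
    · rw [Pp_top (a + 1) (k + 1) n (by omega), Pp_top a (k + 1) n (by omega)]
      have := ih hn
      push_cast
      push_cast at this
      linear_combination ((z - ((n : R2) + 1)) * (a + (n : R2) + 2)) * this
    · have hk : k = n := by omega
      subst hk
      rw [Pp_self, Pp_self]
      push_cast
      ring

/-- The per-index telescoping identity. -/
lemma perk (a : R2) (e k : ℕ) (hk : k ≤ e) :
    (θ + (a + Cc) ^ 2) * ((e.choose k : R2) * Ak k * Pp (a + 1) k e)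
      - ((a + (e : R2) + 1 - z) * (a + (e : R2) + 1)) * ((e.choose k : R2) * Ak k * Pp a k e)
      - (e.choose k : R2) * (Ak k * Pp a k (e + 1) + Ak (k + 1) * Pp a (k + 1) (e + 1))
    = Ee a e (k + 1) - Ee a e k := by
  rcases Nat.lt_or_ge k e with hlt | hge
  · -- k < e
    have hC : ((e.choose (k + 1) : R2)) * ((k : R2) + 1)
        = (e.choose k : R2) * ((e : R2) - (k : R2)) := by
      have h := Nat.choose_succ_right_eq e k
      have h' := congrArg (fun n : ℕ => (n : R2)) h
      push_cast [Nat.cast_sub hk] at h'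
      linear_combination h'
    have hK := lemK a k e hlt
    rw [Ee, Ee, Ak_succ,
      Pp_top a k e hk, Pp_top a (k + 1) e (by omega),
      Pp_bot a k e hlt, Pp_bot (a + 1) k e hlt]
    push_cast
    linear_combination
      (Ak k * (e.choose k : R2) *
        ((z - (k : R2) - 1) * (θ + (a + Cc) ^ 2)
          + (k : R2) * (a + (k : R2) + 1) * (z - (k : R2) - 1)
          - ((e : R2) - (k : R2)) * (θ + ((k : R2) + Cc) ^ 2))) * hK
      - (Ak k * (θ + ((k : R2) + Cc) ^ 2) * (a + (k : R2) + 2) * Pp (a + 1) (k + 1) e) * hC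
      + (Ak k * (e.choose k : R2) * (a + (e : R2) + 1) * (z - (k : R2) - 1)
          * (a - (k : R2)) * Pp a (k + 1) e) * h2
  · -- k = e
    have hk' : k = e := by omega
    subst hk'
    rw [Ee, Ee, Ak_succ, Pp_self, Pp_self, Pp_self,
      Pp_top a k k le_rfl, Pp_self]
    simp only [Nat.choose_succ_self, Nat.cast_zero, Nat.choose_self, Nat.cast_one]
    linear_combination (Ak k * (a - (k : R2))) * h2

/-- The core recurrence. -/
lemma core (a : R2) (e : ℕ) :
    Sa a (e + 1) = (θ + (a + Cc) ^ 2) * Sa (a + 1) e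
      - ((a + (e : R2) + 1 - z) * (a + (e : R2) + 1)) * Sa a e := by
  have expand : Sa a (e + 1)
      = ∑ k ∈ Finset.range (e + 1),
          (e.choose k : R2) * (Ak k * Pp a k (e + 1) + Ak (k + 1) * Pp a (k + 1) (e + 1)) := by
    rw [Sa, Finset.sum_range_succ']
    have hsplit : ∀ k ∈ Finset.range (e + 1),
        ((e + 1).choose (k + 1) : R2) * Ak (k + 1) * Pp a (k + 1) (e + 1)
          = (e.choose k : R2) * (Ak (k + 1) * Pp a (k + 1) (e + 1))
            + (e.choose (k + 1) : R2) * Ak (k + 1) * Pp a (k + 1) (e + 1) := by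
      intro k _
      rw [Nat.choose_succ_succ]
      push_cast
      ring
    rw [Finset.sum_congr rfl hsplit, Finset.sum_add_distrib]
    have back : ∑ k ∈ Finset.range (e + 1),
        (e.choose (k + 1) : R2) * Ak (k + 1) * Pp a (k + 1) (e + 1)
          + ((e + 1).choose 0 : R2) * Ak 0 * Pp a 0 (e + 1)
        = ∑ k ∈ Finset.range (e + 1), (e.choose k : R2) * (Ak k * Pp a k (e + 1)) := by
      have : ∑ k ∈ Finset.range (e + 2), (e.choose k : R2) * Ak k * Pp a k (e + 1)
          = ∑ k ∈ Finset.range (e + 1), (e.choose k : R2) * Ak k * Pp a k (e + 1) := by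
        rw [Finset.sum_range_succ, Nat.choose_succ_self]
        simp
      rw [Finset.sum_range_succ'] at this
      simp only [Nat.choose_zero_right, Nat.cast_one] at this ⊢
      rw [this]
      exact Finset.sum_congr rfl (fun k _ => by ring)
    rw [add_assoc, back, ← Finset.sum_add_distrib]
    exact Finset.sum_congr rfl (fun k _ => by ring)
  have tele : ∑ k ∈ Finset.range (e + 1), (Ee a e (k + 1) - Ee a e k) = 0 := by
    rw [Finset.sum_range_sub (fun k => Ee a e k)]
    rw [Ee, Ee]
    simp [Nat.choose_succ_self]
  have main : (θ + (a + Cc) ^ 2) * Sa (a + 1) e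
      - ((a + (e : R2) + 1 - z) * (a + (e : R2) + 1)) * Sa a e - Sa a (e + 1) = 0 := by
    rw [expand, Sa, Sa, Finset.mul_sum, Finset.mul_sum, ← Finset.sum_sub_distrib,
      ← Finset.sum_sub_distrib, ← tele]
    exact Finset.sum_congr rfl (fun k hk => perk a e k (by
      have := Finset.mem_range.mp hk; omega))
  linear_combination -main

lemma M_eq (u d : ℕ) : M u d = Sa (z + (u : R2) - (d : R2)) d := by
  rw [M, Sa]
  refine Finset.sum_congr rfl (fun k _ => ?_)
  rw [Ak, Pp]
  congr 1
  refine Finset.prod_congr rfl (fun i _ => ?_)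
  ring

theorem stmt4 (u d : ℕ) (hd : 1 ≤ d) :
    M u d =
      (θ + (z + rho ((u : ℤ) - (d : ℤ))) ^ 2) * M u (d - 1) -
        (u : R2) * (z + (u : R2)) * M (u - 1) (d - 1) := by
  obtain ⟨e, rfl⟩ : ∃ e, d = e + 1 := ⟨d - 1, by omega⟩
  simp only [Nat.add_sub_cancel]
  rw [M_eq u (e + 1), M_eq u e, M_eq (u - 1) e]
  have hcoef : (θ + (z + rho ((u : ℤ) - ((e + 1 : ℕ) : ℤ))) ^ 2)
      = (θ + ((z + (u : R2) - ((e + 1 : ℕ) : R2)) + Cc) ^ 2) := by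
    rw [rho, Cc]
    push_cast
    ring
  have hcore := core (z + (u : R2) - ((e + 1 : ℕ) : R2)) e
  have ha1 : z + (u : R2) - ((e + 1 : ℕ) : R2) + 1 = z + (u : R2) - (e : R2) := by
    push_cast; ring
  rw [ha1] at hcore
  rcases u with _ | v
  · -- u = 0
    have h0 : (z + ((0 : ℕ) : R2) - ((e + 1 : ℕ) : R2) + (e : R2) + 1 - z) = 0 := by
      push_cast; ring
    rw [hcore, hcoef, h0]
    push_cast
    ring
  · -- u = v + 1
    have ha2 : z + (((v + 1 : ℕ) : ℕ) : R2) - ((e + 1 : ℕ) : R2)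
        = z + (((v + 1 : ℕ) - 1 : ℕ) : R2) - (e : R2) := by
      push_cast; ring
    have hU : ((z + (((v + 1 : ℕ)) : R2) - ((e + 1 : ℕ) : R2)) + (e : R2) + 1 - z)
        * ((z + (((v + 1 : ℕ)) : R2) - ((e + 1 : ℕ) : R2)) + (e : R2) + 1)
        = (((v + 1 : ℕ)) : R2) * (z + (((v + 1 : ℕ)) : R2)) := by
      push_cast; ring
    rw [hcore, hcoef, hU, ha2]
end

section
/- Define M^u_d(z,θ) = Σ_{k=0}^{d} C(d,k) · ∏_{i=0}^{k-1}(θ + ρ_i²) · ∏_{i=k+1}^{d}(z-i)(z+i+u-d), where ρ_i = i + 1/2. Then for all natural numbers u ≥ 1 and d ≥ 1, one has (u+d)(z+u-d) · M^u_d = u(z+u) · M^{u-1}_d + d(z-d)(θ + (z+ρ_{u-d})²) · M^u_{d-1}, as an identity of polynomials in z and θ. -/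
open Finset

noncomputable def Aa (k : ℕ) : R2 := ∏ i ∈ Finset.range k, (θ + (rho (i : ℤ)) ^ 2)

noncomputable def Bb (u d k : ℕ) : R2 :=
  ∏ i ∈ Finset.Icc (k + 1) d, ((z - (i : R2)) * (z + (i : R2) + (u : R2) - (d : R2)))

noncomputable def Gg (u d k : ℕ) : R2 :=
  ((d : R2) - (k : R2)) * (d.choose k : R2) * (z - ((k : R2) + 1)) * Aa (k + 1) * Bb u d (k + 1)

noncomputable def Hh (u d : ℕ) : ℕ → R2
  | 0 => 0
  | (k + 1) => - Gg u d k

lemma half_two : (MvPolynomial.C (1/2 : ℚ) : R2) * 2 = 1 := by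
  have h2 : (2 : R2) = MvPolynomial.C (2 : ℚ) := by
    simp [map_ofNat]
  rw [h2, ← map_mul]
  norm_num

lemma half_sq : (MvPolynomial.C (1/2 : ℚ) : R2) ^ 2 = MvPolynomial.C (1/4 : ℚ) := by
  rw [← map_pow]
  norm_num

lemma sq_half (w : R2) :
    (w + MvPolynomial.C (1/2 : ℚ)) ^ 2 = w ^ 2 + w + MvPolynomial.C (1/4 : ℚ) := by
  linear_combination w * half_two + half_sq

lemma Icc_prod_bot (f : ℕ → R2) {a b : ℕ} (h : a ≤ b) :
    ∏ i ∈ Finset.Icc a b, f i = f a * ∏ i ∈ Finset.Icc (a + 1) b, f i := by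
  rw [Finset.Icc_eq_cons_Ioc h, Finset.prod_cons, Finset.Icc_add_one_left_eq_Ioc]

lemma Pshift (f : ℕ → R2) (a b : ℕ) :
    ∏ i ∈ Finset.Icc (a + 1) (b + 1), f i = ∏ i ∈ Finset.Icc a b, f (i + 1) := by
  rw [← Finset.map_add_right_Icc a b 1, Finset.prod_map]
  rfl

lemma hAa (m : ℕ) :
    Aa (m + 1) = Aa m * (θ + (m : R2) ^ 2 + (m : R2) + MvPolynomial.C (1/4 : ℚ)) := by
  have h : Aa (m + 1) = Aa m * (θ + (rho (m : ℤ)) ^ 2) := Finset.prod_range_succ _ _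
  have h2 : rho (m : ℤ) = (m : R2) + MvPolynomial.C (1/2 : ℚ) := by
    rw [rho]; push_cast; ring
  rw [h, h2, sq_half]; ring

lemma R3 (u d k : ℕ) (h : k + 1 ≤ d) :
    Bb u d k = (z - ((k : R2) + 1)) * (z + ((k : R2) + 1) + (u : R2) - (d : R2)) * Bb u d (k + 1) := by
  rw [Bb, Bb, Icc_prod_bot _ h]
  push_cast
  ring

lemma R1 (u d k : ℕ) (hu : 1 ≤ u) (hd : 1 ≤ d) (hk : k ≤ d) :
    (z + (u : R2)) * Bb (u - 1) d k = (z + (k : R2) + (u : R2) - (d : R2)) * Bb u d k := by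
  obtain ⟨v, rfl⟩ : ∃ v, u = v + 1 := ⟨u - 1, by omega⟩
  obtain ⟨e, rfl⟩ : ∃ e, d = e + 1 := ⟨d - 1, by omega⟩
  simp only [Nat.add_sub_cancel]
  rw [Bb, Bb, Finset.prod_mul_distrib, Finset.prod_mul_distrib]
  have h1 : ∏ i ∈ Finset.Icc (k + 1) (e + 1), (z + (i : R2) + (v : R2) - ((e + 1 : ℕ) : R2))
      = ∏ i ∈ Finset.Icc k e, (z + (i : R2) + ((v + 1 : ℕ) : R2) - ((e + 1 : ℕ) : R2)) := by
    rw [Pshift]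
    exact Finset.prod_congr rfl fun i _ => by push_cast; ring
  have h2 : ∏ i ∈ Finset.Icc k (e + 1), (z + (i : R2) + ((v + 1 : ℕ) : R2) - ((e + 1 : ℕ) : R2))
      = (∏ i ∈ Finset.Icc k e, (z + (i : R2) + ((v + 1 : ℕ) : R2) - ((e + 1 : ℕ) : R2)))
        * (z + ((e + 1 : ℕ) : R2) + ((v + 1 : ℕ) : R2) - ((e + 1 : ℕ) : R2)) :=
    Finset.prod_Icc_succ_top (by omega) _
  have h3 : ∏ i ∈ Finset.Icc k (e + 1), (z + (i : R2) + ((v + 1 : ℕ) : R2) - ((e + 1 : ℕ) : R2))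
      = (z + (k : R2) + ((v + 1 : ℕ) : R2) - ((e + 1 : ℕ) : R2))
        * ∏ i ∈ Finset.Icc (k + 1) (e + 1), (z + (i : R2) + ((v + 1 : ℕ) : R2) - ((e + 1 : ℕ) : R2)) :=
    Icc_prod_bot _ hk
  rw [h1]
  push_cast at h2 h3 ⊢
  linear_combination (∏ i ∈ Finset.Icc (k + 1) (e + 1), (z - (i : R2))) * h3
    - (∏ i ∈ Finset.Icc (k + 1) (e + 1), (z - (i : R2))) * h2

lemma R2lem (u d k : ℕ) (hd : 1 ≤ d) (hk : k + 1 ≤ d) :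
    (z - (d : R2)) * Bb u (d - 1) k = (z - ((k : R2) + 1)) * Bb u d (k + 1) := by
  obtain ⟨e, rfl⟩ : ∃ e, d = e + 1 := ⟨d - 1, by omega⟩
  simp only [Nat.add_sub_cancel]
  rw [Bb, Bb, Finset.prod_mul_distrib, Finset.prod_mul_distrib]
  have hP : ∏ i ∈ Finset.Icc (k + 1 + 1) (e + 1), (z + (i : R2) + (u : R2) - ((e + 1 : ℕ) : R2))
      = ∏ i ∈ Finset.Icc (k + 1) e, (z + (i : R2) + (u : R2) - ((e : ℕ) : R2)) := by
    rw [Pshift]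
    exact Finset.prod_congr rfl fun i _ => by push_cast; ring
  have hQ2 : ∏ i ∈ Finset.Icc (k + 1) (e + 1), (z - (i : R2))
      = (∏ i ∈ Finset.Icc (k + 1) e, (z - (i : R2))) * (z - ((e + 1 : ℕ) : R2)) :=
    Finset.prod_Icc_succ_top (by omega) _
  have hQ3 : ∏ i ∈ Finset.Icc (k + 1) (e + 1), (z - (i : R2))
      = (z - ((k + 1 : ℕ) : R2)) * ∏ i ∈ Finset.Icc (k + 1 + 1) (e + 1), (z - (i : R2)) :=
    Icc_prod_bot _ hk
  rw [hP]
  push_cast at hQ2 hQ3 ⊢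
  linear_combination (∏ i ∈ Finset.Icc (k + 1) e, (z + (i : R2) + (u : R2) - (e : R2))) * hQ3
    - (∏ i ∈ Finset.Icc (k + 1) e, (z + (i : R2) + (u : R2) - (e : R2))) * hQ2

lemma key (u d k : ℕ) (hu : 1 ≤ u) (hd : 1 ≤ d) (hk : k ≤ d) :
    ((u : R2) + (d : R2)) * (z + (u : R2) - (d : R2)) * ((d.choose k : R2) * Aa k * Bb u d k)
    - ((u : R2) * (z + (u : R2)) * ((d.choose k : R2) * Aa k * Bb (u - 1) d k)
      + (d : R2) * (z - (d : R2)) * (θ + (z + rho ((u : ℤ) - (d : ℤ))) ^ 2)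
        * (((d - 1).choose k : R2) * Aa k * Bb u (d - 1) k))
    = Hh u d (k + 1) - Hh u d k := by
  have hsq : (z + rho ((u : ℤ) - (d : ℤ))) ^ 2
      = (z + ((u : R2) - (d : R2))) ^ 2 + (z + ((u : R2) - (d : R2))) + MvPolynomial.C (1/4 : ℚ) := by
    have hrho : z + rho ((u : ℤ) - (d : ℤ)) = z + ((u : R2) - (d : R2)) + MvPolynomial.C (1/2 : ℚ) := by
      rw [rho]; push_cast; ring
    rw [hrho]; exact sq_half _
  have h1 := R1 u d k hu hd hk
  rcases Nat.lt_or_ge k d with hlt | hge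
  · -- k < d
    have h2 := R2lem u d k hd hlt
    have h3 := R3 u d k hlt
    have hnat : d * ((d - 1).choose k) = (d.choose k) * (d - k) := by
      obtain ⟨e, rfl⟩ : ∃ e, d = e + 1 := ⟨d - 1, by omega⟩
      simp only [Nat.add_sub_cancel]
      rw [← Nat.succ_sub_one (e + 1)] at *
      calc (e + 1) * e.choose k = (e + 1).choose (k + 1) * (k + 1) := by
              simpa using Nat.add_one_mul_choose_eq e k
        _ = (e + 1).choose k * (e + 1 - k) := Nat.choose_succ_right_eq _ _
    have h4 : (d : R2) * (((d - 1).choose k : ℕ) : R2)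
        = ((d : R2) - (k : R2)) * ((d.choose k : ℕ) : R2) := by
      have hc := congrArg (Nat.cast : ℕ → R2) hnat
      push_cast [Nat.cast_sub hk] at hc
      linear_combination hc
    have hA := hAa k
    rcases k with _ | j
    · -- k = 0
      simp only [Hh, Gg]
      have hA0 : Aa 0 = 1 := Finset.prod_range_zero _
      rw [hsq]
      push_cast [Nat.choose_zero_right] at h1 h2 h3 hA ⊢
      linear_combination
        (-(u : R2) * Aa 0) * h1
        + (-(d : R2) * (θ + (z + ((u : R2) - (d : R2))) ^ 2 + (z + ((u : R2) - (d : R2)))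
            + MvPolynomial.C (1/4 : ℚ)) * Aa 0) * h2
        + (((u : R2) + (d : R2)) * (z + (u : R2) - (d : R2)) * Aa 0
            - (u : R2) * (z + (u : R2) - (d : R2)) * Aa 0) * h3
        + ((d : R2) * (z - 1) * Bb u d 1) * hA
    · -- k = j + 1
      have h5 : ((d : R2) - (j : R2)) * ((d.choose j : ℕ) : R2)
          = ((j : R2) + 1) * ((d.choose (j + 1) : ℕ) : R2) := by
        have hc := congrArg (Nat.cast : ℕ → R2) (Nat.choose_succ_right_eq d j)
        push_cast [Nat.cast_sub (by omega : j ≤ d)] at hc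
        linear_combination -hc
      simp only [Hh, Gg]
      rw [hsq]
      push_cast at h1 h2 h3 h4 h5 hA ⊢
      linear_combination
        (-(u : R2) * ((d.choose (j + 1) : ℕ) : R2) * Aa (j + 1)) * h1
        + (-(d : R2) * (θ + (z + ((u : R2) - (d : R2))) ^ 2 + (z + ((u : R2) - (d : R2)))
            + MvPolynomial.C (1/4 : ℚ)) * (((d - 1).choose (j + 1) : ℕ) : R2) * Aa (j + 1)) * h2
        + ((((u : R2) + (d : R2)) * (z + (u : R2) - (d : R2))
              - (u : R2) * (z + ((j : R2) + 1) + (u : R2) - (d : R2)))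
            * ((d.choose (j + 1) : ℕ) : R2) * Aa (j + 1)
            - ((d : R2) - (j : R2)) * ((d.choose j : ℕ) : R2) * (z - ((j : R2) + 1)) * Aa (j + 1)) * h3
        + (-(θ + (z + ((u : R2) - (d : R2))) ^ 2 + (z + ((u : R2) - (d : R2)))
            + MvPolynomial.C (1/4 : ℚ)) * Aa (j + 1) * (z - ((j : R2) + 1 + 1)) * Bb u d (j + 1 + 1)) * h4
        + (-(z - ((j : R2) + 1)) * (z - ((j : R2) + 1 + 1)) * (z + ((j : R2) + 1 + 1) + (u : R2) - (d : R2))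
            * Aa (j + 1) * Bb u d (j + 1 + 1)) * h5
        + (((d : R2) - ((j : R2) + 1)) * ((d.choose (j + 1) : ℕ) : R2) * (z - ((j : R2) + 1 + 1))
            * Bb u d (j + 1 + 1)) * hA
  · -- k = d
    have hkd : k = d := le_antisymm hk hge
    subst hkd
    obtain ⟨e, rfl⟩ : ∃ e, k = e + 1 := ⟨k - 1, by omega⟩
    have hB0 : Bb u (e + 1) (e + 1 + 1) = 1 := by
      rw [Bb, Finset.Icc_eq_empty (by omega), Finset.prod_empty]
    have hB1 : Bb u (e + 1) (e + 1) = 1 := by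
      rw [Bb, Finset.Icc_eq_empty (by omega), Finset.prod_empty]
    have hB1' : Bb (u - 1) (e + 1) (e + 1) = 1 := by
      rw [Bb, Finset.Icc_eq_empty (by omega), Finset.prod_empty]
    simp only [Hh, Gg, Nat.add_sub_cancel, Nat.choose_self, Nat.choose_succ_self_right,
      Nat.choose_eq_zero_of_lt (by omega : e < e + 1), hB0, hB1, hB1']
    rw [hB1, hB1'] at h1
    push_cast at h1 ⊢
    linear_combination (-(u : R2) * Aa (e + 1)) * h1

theorem stmt5 (u d : ℕ) (hu : 1 ≤ u) (hd : 1 ≤ d) :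
    ((u : R2) + (d : R2)) * (z + (u : R2) - (d : R2)) * M u d =
      (u : R2) * (z + (u : R2)) * M (u - 1) d +
        (d : R2) * (z - (d : R2)) * (θ + (z + rho ((u : ℤ) - (d : ℤ))) ^ 2) * M u (d - 1) := by
  have hM : ∀ (a b : ℕ), M a b
      = ∑ k ∈ Finset.range (b + 1), ((b.choose k : ℕ) : R2) * Aa k * Bb a b k := fun _ _ => rfl
  rw [hM, hM, hM, Nat.sub_add_cancel hd, ← sub_eq_zero]
  have tele : ∑ k ∈ Finset.range (d + 1),
      (((u : R2) + (d : R2)) * (z + (u : R2) - (d : R2)) * ((d.choose k : R2) * Aa k * Bb u d k)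
       - ((u : R2) * (z + (u : R2)) * ((d.choose k : R2) * Aa k * Bb (u - 1) d k)
         + (d : R2) * (z - (d : R2)) * (θ + (z + rho ((u : ℤ) - (d : ℤ))) ^ 2)
           * (((d - 1).choose k : R2) * Aa k * Bb u (d - 1) k))) = 0 := by
    rw [Finset.sum_congr rfl (fun k hkm =>
      key u d k hu hd (Nat.lt_succ_iff.mp (Finset.mem_range.mp hkm))),
      Finset.sum_range_sub]
    simp [Hh, Gg]
  rw [Finset.mul_sum, Finset.mul_sum, Finset.mul_sum]
  have hext : (∑ i ∈ Finset.range d,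
        (d : R2) * (z - (d : R2)) * (θ + (z + rho ((u : ℤ) - (d : ℤ))) ^ 2)
          * (((d - 1).choose i : R2) * Aa i * Bb u (d - 1) i))
      = ∑ i ∈ Finset.range (d + 1),
        (d : R2) * (z - (d : R2)) * (θ + (z + rho ((u : ℤ) - (d : ℤ))) ^ 2)
          * (((d - 1).choose i : R2) * Aa i * Bb u (d - 1) i) := by
    rw [Finset.sum_range_succ, Nat.choose_eq_zero_of_lt (by omega : d - 1 < d)]
    push_cast
    ring
  rw [hext, ← Finset.sum_add_distrib, ← Finset.sum_sub_distrib, ← tele]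
end
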